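/- Let G be a connected irregular graph on n ≥ 3 vertices with m edges. Suppose e = uv is an edge with deg(u) ≤ 2m/n and deg(v) ≤ 2m/n, and w is a vertex with deg(w) > 2m/n not adjacent to u and distinct from u. Let G* = G − uv + uw. If G* is connected, then s(G*) = s(G) + 2; in particular s(G) < s(G*). -/

import Mathlib

open Finset

/-- The degree deviation measure `s(G) = ∑_v |deg(v) - 2m/n|`. -/
noncomputable def degDev {V : Type*} [Fintype V] [DecidableEq V]
    (G : SimpleGraph V) [DecidableRel G.Adj] : ℝ :=
  ∑ v : V, |(G.degree v : ℝ) - 2 * G.edgeFinset.card / (Fintype.card V)|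

set_option maxHeartbeats 1000000 in
theorem degDev_rotateEdge {n : ℕ} (hn : 3 ≤ n) (G : SimpleGraph (Fin n))
    [DecidableRel G.Adj] (hconn : G.Connected)
    (hirr : ∃ u v, G.degree u ≠ G.degree v)
    (u v w : Fin n) (hadj : G.Adj u v)
    (hu : (G.degree u : ℝ) ≤ 2 * G.edgeFinset.card / n)
    (hv : (G.degree v : ℝ) ≤ 2 * G.edgeFinset.card / n)
    (hw : 2 * G.edgeFinset.card / n < (G.degree w : ℝ))
    (huw : u ≠ w) (hnadj : ¬ G.Adj u w)
    (hconn' : (G.deleteEdges {s(u, v)} ⊔ SimpleGraph.fromEdgeSet {s(u, w)}).Connected) :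
    @degDev _ _ _ (G.deleteEdges {s(u, v)} ⊔ SimpleGraph.fromEdgeSet {s(u, w)})
        (Classical.decRel _) = degDev G + 2 ∧
    degDev G < @degDev _ _ _ (G.deleteEdges {s(u, v)} ⊔ SimpleGraph.fromEdgeSet {s(u, w)})
        (Classical.decRel _) := by
  set G' := G.deleteEdges {s(u, v)} ⊔ SimpleGraph.fromEdgeSet {s(u, w)} with hG'def
  letI : DecidableRel G'.Adj := Classical.decRel _
  have hne_uv : u ≠ v := hadj.ne
  have hvw : v ≠ w := by
    intro h; subst h; exact absurd hv (not_le.mpr hw)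
  have hadj' : ∀ x y, G'.Adj x y ↔
      (G.Adj x y ∧ ¬((x = u ∧ y = v) ∨ (x = v ∧ y = u))) ∨
      (((x = u ∧ y = w) ∨ (x = w ∧ y = u)) ∧ x ≠ y) := by
    intro x y
    simp [hG'def, SimpleGraph.fromEdgeSet_adj, Sym2.eq_iff]
  -- neighbor finsets
  have hNu : G'.neighborFinset u = insert w ((G.neighborFinset u).erase v) := by
    ext y
    simp only [SimpleGraph.mem_neighborFinset, hadj', mem_insert, mem_erase]
    constructor
    · intro h; aesop
    · intro h; aesop
  have hNv : G'.neighborFinset v = (G.neighborFinset v).erase u := by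
    ext y
    simp only [SimpleGraph.mem_neighborFinset, hadj', mem_erase]
    constructor
    · intro h; aesop
    · intro h; aesop
  have hNw : G'.neighborFinset w = insert u (G.neighborFinset w) := by
    ext y
    simp only [SimpleGraph.mem_neighborFinset, hadj', mem_insert]
    constructor
    · intro h; aesop
    · intro h; aesop
  have hNo : ∀ x, x ≠ u → x ≠ v → x ≠ w → G'.neighborFinset x = G.neighborFinset x := by
    intro x hxu hxv hxw
    ext y
    simp only [SimpleGraph.mem_neighborFinset, hadj']
    constructor
    · intro h; aesop
    · intro h; aesop
  -- degree facts
  have hvmem : v ∈ G.neighborFinset u := by simpa using hadj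
  have humem : u ∈ G.neighborFinset v := by simpa using hadj.symm
  have hdu : G'.degree u = G.degree u := by
    simp only [SimpleGraph.degree, hNu]
    rw [card_insert_of_notMem (by simp [hnadj, huw.symm]), card_erase_of_mem hvmem]
    have : 1 ≤ (G.neighborFinset u).card := card_pos.mpr ⟨v, hvmem⟩
    omega
  have hdv : (G'.degree v : ℝ) = (G.degree v : ℝ) - 1 := by
    have : G.degree v = (G.neighborFinset v).card := rfl
    have h1 : 1 ≤ (G.neighborFinset v).card := card_pos.mpr ⟨u, humem⟩
    simp only [SimpleGraph.degree, hNv, card_erase_of_mem humem]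
    push_cast [h1]
    ring
  have hdw : (G'.degree w : ℝ) = (G.degree w : ℝ) + 1 := by
    simp only [SimpleGraph.degree, hNw]
    rw [card_insert_of_notMem (by simp only [SimpleGraph.mem_neighborFinset]; exact fun h => hnadj h.symm)]
    push_cast
    ring
  have hdo : ∀ x, x ≠ v → x ≠ w → G'.degree x = G.degree x := by
    intro x hxv hxw
    by_cases hxu : x = u
    · subst hxu; exact hdu
    · simp only [SimpleGraph.degree, hNo x hxu hxv hxw]
  -- edge count equality
  have hm : G'.edgeFinset.card = G.edgeFinset.card := by
    have h1 : (∑ x, (G'.degree x : ℤ)) = ∑ x, (G.degree x : ℤ) := by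
      have key : ∀ x : Fin n, (G'.degree x : ℤ) =
          (G.degree x : ℤ) + (if x = v then -1 else if x = w then 1 else 0) := by
        intro x
        by_cases hxv : x = v
        · rw [hxv, if_pos rfl]
          have h2 : (G'.degree v : ℝ) = ((G.degree v : ℤ) + (-1) : ℤ) := by push_cast; linarith
          exact_mod_cast h2
        · by_cases hxw : x = w
          · rw [hxw, if_neg (fun h => hvw h.symm), if_pos rfl]
            have h2 : (G'.degree w : ℝ) = ((G.degree w : ℤ) + 1 : ℤ) := by push_cast; linarith
            exact_mod_cast h2
          · rw [if_neg hxv, if_neg hxw, hdo x hxv hxw, add_zero]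
      rw [Finset.sum_congr rfl (fun x _ => key x), Finset.sum_add_distrib]
      have : (∑ x : Fin n, (if x = v then (-1 : ℤ) else if x = w then 1 else 0)) = 0 := by
        have : ∀ x : Fin n, (if x = v then (-1 : ℤ) else if x = w then 1 else 0) =
            (if x = v then (-1 : ℤ) else 0) + (if x = w then 1 else 0) := by
          intro x
          by_cases hxv : x = v
          · rw [hxv]; simp [hvw]
          · simp [hxv]
        rw [Finset.sum_congr rfl (fun x _ => this x), Finset.sum_add_distrib]
        simp
      rw [this]; ring
    have h2 : (∑ x, G'.degree x) = ∑ x, G.degree x := by exact_mod_cast h1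
    have h3 := SimpleGraph.sum_degrees_eq_twice_card_edges G'
    have h4 := SimpleGraph.sum_degrees_eq_twice_card_edges G
    convert Nat.eq_of_mul_eq_mul_left two_pos (h3.symm.trans (h2.trans h4)) using 2
    ext; simp
  -- main computation
  set a : ℝ := 2 * G.edgeFinset.card / n with ha
  have hva : (G.degree v : ℝ) ≤ a := hv
  have hwa : a < (G.degree w : ℝ) := hw
  have hmain : degDev G' = degDev G + 2 := by
    unfold degDev
    rw [Fintype.card_fin, show ∀ inst, @Finset.card _ (@SimpleGraph.edgeFinset _ G' inst) = #G.edgeFinset from fun _ => by convert hm using 2; ext; simp]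
    have key : ∀ x : Fin n, |(G'.degree x : ℝ) - a| =
        |(G.degree x : ℝ) - a| + (if x = v then 1 else if x = w then 1 else 0) := by
      intro x
      by_cases hxv : x = v
      · rw [hxv, if_pos rfl, hdv, abs_of_nonpos (by linarith), abs_of_nonpos (by linarith)]
        ring
      · by_cases hxw : x = w
        · rw [hxw, if_neg (fun h => hvw h.symm), if_pos rfl, hdw, abs_of_nonneg (by linarith),
            abs_of_nonneg (by linarith)]
          ring
        · rw [if_neg hxv, if_neg hxw, hdo x hxv hxw, add_zero]
    rw [Finset.sum_congr rfl (fun x _ => key x), Finset.sum_add_distrib]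
    congr 1
    have : ∀ x : Fin n, (if x = v then (1 : ℝ) else if x = w then 1 else 0) =
        (if x = v then (1 : ℝ) else 0) + (if x = w then 1 else 0) := by
      intro x
      by_cases hxv : x = v
      · rw [hxv]; simp [hvw]
      · simp [hxv]
    rw [Finset.sum_congr rfl (fun x _ => this x), Finset.sum_add_distrib]
    simp
    norm_num
  exact ⟨hmain, by rw [hmain]; linarith⟩
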